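/- Let q ≥ 2 be an integer, let N, r, t be non-negative integers, and let θ be a real number. Then the number of integers n with 0 ≤ n < N such that e(θ S_q(n+r)) · conj(e(θ S_q(n))) ≠ e(θ S_{q,t}(n+r)) · conj(e(θ S_{q,t}(n))) is at most N·r/q^t + r. -/

import Mathlib

noncomputable section

/-- `e x = exp(2 π i x)`. -/
def e (x : ℝ) : ℂ := Complex.exp (2 * Real.pi * Complex.I * x)

/-- Sum of digits of `n` in base `q`. -/
def Sq (q n : ℕ) : ℕ := (Nat.digits q n).sum

/-- Truncated sum of digits: `S_{q,t}(n) = S_q(n mod q^t)`. -/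
def Sqt (q t n : ℕ) : ℕ := Sq q (n % q ^ t)

lemma Sq_add_pow_mul {q : ℕ} (hq : 2 ≤ q) {t b : ℕ} (hb : b < q ^ t) (a : ℕ) :
    Sq q (b + q ^ t * a) = Sq q b + Sq q a := by
  rcases Nat.eq_zero_or_pos a with rfl | ha
  · simp [Sq]
  have hlen : (Nat.digits q b).length ≤ t := by
    rcases Nat.eq_zero_or_pos b with rfl | hb0
    · simp
    rw [Nat.digits_len q b (by omega) (by omega)]
    have := Nat.log_lt_of_lt_pow (by omega : b ≠ 0) hb
    omega
  have key := Nat.digits_append_zeroes_append_digits (b := q) (k := t - (Nat.digits q b).length)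
    (m := a) (n := b) (by omega) ha
  rw [show (Nat.digits q b).length + (t - (Nat.digits q b).length) = t by omega] at key
  unfold Sq
  rw [← key]
  simp [List.sum_append, List.sum_replicate]

lemma e_mul_conj (a b : ℝ) : e a * (starRingEnd ℂ) (e b) = e (a - b) := by
  unfold e
  rw [← Complex.exp_conj]
  rw [← Complex.exp_add]
  congr 1
  simp [Complex.ext_iff]
  ring

lemma key_eq {q : ℕ} (hq : 2 ≤ q) {t r n : ℕ} (h : n % q ^ t + r < q ^ t) (θ : ℝ) :
    e (θ * Sq q (n + r)) * (starRingEnd ℂ) (e (θ * Sq q n)) =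
      e (θ * Sqt q t (n + r)) * (starRingEnd ℂ) (e (θ * Sqt q t n)) := by
  have hqt : 0 < q ^ t := pow_pos (by omega : 0 < q) t
  have hn : n = n % q ^ t + q ^ t * (n / q ^ t) := (Nat.mod_add_div n (q ^ t)).symm
  have h1 : Sq q n = Sq q (n % q ^ t) + Sq q (n / q ^ t) := by
    conv_lhs => rw [hn]
    exact Sq_add_pow_mul hq (Nat.mod_lt n hqt) _
  have hnr : n + r = (n % q ^ t + r) + q ^ t * (n / q ^ t) := by omega
  have h2 : Sq q (n + r) = Sq q (n % q ^ t + r) + Sq q (n / q ^ t) := by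
    rw [hnr]; exact Sq_add_pow_mul hq h _
  have h3 : Sqt q t (n + r) = Sq q (n % q ^ t + r) := by
    unfold Sqt
    congr 1
    rw [hnr, Nat.add_mul_mod_self_left, Nat.mod_eq_of_lt h]
  have h4 : Sqt q t n = Sq q (n % q ^ t) := rfl
  rw [e_mul_conj, e_mul_conj, h2, h3, h4, h1]
  congr 1
  push_cast
  ring

/-- Truncation lemma for the base-`q` sum of digits. -/
theorem truncation_base_q (q : ℕ) (hq : 2 ≤ q) (N r t : ℕ) (θ : ℝ) :
    (((Finset.range N).filter fun n =>
        e (θ * Sq q (n + r)) * (starRingEnd ℂ) (e (θ * Sq q n)) ≠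
          e (θ * Sqt q t (n + r)) * (starRingEnd ℂ) (e (θ * Sqt q t n))).card : ℝ) ≤
      (N : ℝ) * r / q ^ t + r := by
  have hqt : 0 < q ^ t := pow_pos (by omega : 0 < q) t
  have hqtR : (0:ℝ) < (q:ℝ) ^ t := by positivity
  -- bad set is contained in {n : q^t ≤ n % q^t + r}
  have hsub : ((Finset.range N).filter fun n =>
        e (θ * Sq q (n + r)) * (starRingEnd ℂ) (e (θ * Sq q n)) ≠
          e (θ * Sqt q t (n + r)) * (starRingEnd ℂ) (e (θ * Sqt q t n))) ⊆
      (Finset.range N).filter fun n => q ^ t ≤ n % q ^ t + r := by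
    intro n hn
    simp only [Finset.mem_filter] at hn ⊢
    refine ⟨hn.1, ?_⟩
    by_contra hc
    exact hn.2 (key_eq hq (by omega) θ)
  rcases le_or_gt (q ^ t) r with hr | hr
  · -- trivial case: bound exceeds N
    calc (((Finset.range N).filter _).card : ℝ) ≤ ((Finset.range N).card : ℝ) := by
          exact_mod_cast Finset.card_filter_le _ _
      _ = (N : ℝ) := by simp
      _ ≤ (N : ℝ) * r / q ^ t + r := by
          have : (q:ℝ) ^ t ≤ (r:ℝ) := by exact_mod_cast hr
          have hN : (0:ℝ) ≤ (N:ℝ) := Nat.cast_nonneg N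
          have : (N:ℝ) ≤ (N:ℝ) * r / q ^ t := by
            rw [le_div_iff₀ hqtR]
            nlinarith
          nlinarith [Nat.cast_nonneg (α := ℝ) r]
  · -- count n < N with q^t - r ≤ n % q^t
    have hcard : ((Finset.range N).filter fun n => q ^ t ≤ n % q ^ t + r).card
        ≤ (N / q ^ t + 1) * r := by
      have : ((Finset.range N).filter fun n => q ^ t ≤ n % q ^ t + r).card ≤
          ((Finset.range (N / q ^ t + 1)) ×ˢ (Finset.range r)).card := by
        apply Finset.card_le_card_of_injOn (fun n => (n / q ^ t, n % q ^ t - (q ^ t - r)))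
        · intro n hn
          simp only [Finset.mem_coe, Finset.mem_filter, Finset.mem_range] at hn
          simp only [Finset.mem_coe, Finset.mem_product, Finset.mem_range]
          constructor
          · exact Nat.lt_succ_of_le (Nat.div_le_div_right (le_of_lt hn.1))
          · have := Nat.mod_lt n hqt
            omega
        · intro a ha b hb hab
          simp only [Finset.mem_coe, Finset.mem_filter] at ha hb
          simp only [Prod.mk.injEq] at hab
          obtain ⟨hd, hm⟩ := hab
          have ha' := Nat.mod_add_div a (q ^ t)
          have hb' := Nat.mod_add_div b (q ^ t)
          rw [← hd] at hb'
          omega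
      simpa [Finset.card_product] using this
    calc (((Finset.range N).filter _).card : ℝ)
        ≤ (((N / q ^ t + 1) * r : ℕ) : ℝ) := by
          exact_mod_cast le_trans (Finset.card_le_card hsub) hcard
      _ = ((N / q ^ t : ℕ) : ℝ) * r + r := by push_cast; ring
      _ ≤ (N : ℝ) / q ^ t * r + r := by
          have : ((N / q ^ t : ℕ) : ℝ) ≤ (N : ℝ) / (q : ℝ) ^ t := by
            rw [le_div_iff₀ hqtR]
            exact_mod_cast Nat.div_mul_le_self N (q ^ t)
          nlinarith [Nat.cast_nonneg (α := ℝ) r]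
      _ = (N : ℝ) * r / q ^ t + r := by ring

end
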